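/- If the fundamental tensor F satisfies the defining condition of class F₁₀, then the torsion tensor T¹ of the first natural connection satisfies T¹(x,y,z) = η(x)T¹(ξ,y,z) − η(y)T¹(ξ,x,z) and T¹(ξ,y,z) = −T¹(ξ,z,y) = −T¹(ξ,φy,φz) for all x, y, z ∈ V. -/
import Mathlib


open scoped RealInnerProductSpace

noncomputable section

variable {V : Type*} [NormedAddCommGroup V] [InnerProductSpace ℝ V]

/-- A Riemannian Π-structure on a real inner product space `V`:
a linear map `phi`, a vector `xi` (with dual form `η x = ⟪x, xi⟫`) satisfying
the defining algebraic identities. -/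
structure PiStruct (V : Type*) [NormedAddCommGroup V] [InnerProductSpace ℝ V] where
  phi : V →ₗ[ℝ] V
  xi : V
  phi_xi : phi xi = 0
  phi_phi : ∀ x : V, phi (phi x) = x - (⟪x, xi⟫ : ℝ) • xi
  eta_phi : ∀ x : V, ⟪phi x, xi⟫ = 0
  eta_xi : ⟪xi, xi⟫ = (1 : ℝ)
  g_phi_phi : ∀ x y : V, ⟪phi x, phi y⟫ = ⟪x, y⟫ - ⟪x, xi⟫ * ⟪y, xi⟫
  g_phi_symm : ∀ x y : V, ⟪phi x, y⟫ = ⟪x, phi y⟫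

/-- Trilinear real-valued maps on `V`. -/
abbrev Tri (V : Type*) [NormedAddCommGroup V] [InnerProductSpace ℝ V] :=
  V →ₗ[ℝ] V →ₗ[ℝ] V →ₗ[ℝ] ℝ

/-- The 1-form `η(x) = g(x, ξ)`. -/
def PiStruct.eta (P : PiStruct V) (x : V) : ℝ := ⟪x, P.xi⟫

/-- `F` is a fundamental tensor for the Π-structure `P`. -/
def IsFund (P : PiStruct V) (F : Tri V) : Prop :=
  (∀ x y z : V, F x y z = F x z y) ∧
  (∀ x y z : V, F x y z =
    -F x (P.phi y) (P.phi z) + P.eta y * F x P.xi z + P.eta z * F x y P.xi)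

/-- The Nijenhuis tensor of `F`. -/
def Nij (P : PiStruct V) (F : Tri V) (x y z : V) : ℝ :=
  F (P.phi x) y z - F (P.phi y) x z - F x y (P.phi z) + F y x (P.phi z)
    + P.eta z * (F x (P.phi y) P.xi - F y (P.phi x) P.xi)

/-- The potential of the first natural connection. -/
def Q1 (P : PiStruct V) (F : Tri V) (x y z : V) : ℝ :=
  -(1/2) * F x (P.phi y) z - (1/2) * P.eta z * F x (P.phi y) P.xi
    + P.eta y * F x (P.phi z) P.xi

/-- The potential of the second natural connection. -/
def Q2 (P : PiStruct V) (F : Tri V) (x y z : V) : ℝ :=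
  Q1 P F x y z - (1/8) * (Nij P F (P.phi (P.phi z)) (P.phi (P.phi y)) (P.phi (P.phi x))
    + 2 * P.eta x * Nij P F (P.phi z) (P.phi y) P.xi)

/-- The torsion tensor of the first natural connection. -/
def T1 (P : PiStruct V) (F : Tri V) (x y z : V) : ℝ :=
  -(1/2) * (F x (P.phi y) z - F y (P.phi x) z)
    - (1/2) * P.eta z * (F x (P.phi y) P.xi - F y (P.phi x) P.xi)
    + P.eta y * F x (P.phi z) P.xi - P.eta x * F y (P.phi z) P.xi

/-- The torsion tensor of the second natural connection. -/
def T2 (P : PiStruct V) (F : Tri V) (x y z : V) : ℝ :=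
  Q2 P F x y z - Q2 P F y x z

/-- Identity (*) for a torsion-like tensor `T`. -/
def StarId (P : PiStruct V) (T : V → V → V → ℝ) : Prop :=
  ∀ x y z : V,
    T x y z + T y z x + T (P.phi x) y (P.phi z) + T y (P.phi z) (P.phi x)
    - P.eta x * (T P.xi y z + T y z P.xi - P.eta y * T P.xi z P.xi)
    - P.eta y * (T x P.xi z + T P.xi z x + T (P.phi x) P.xi (P.phi z)
        + T P.xi (P.phi z) (P.phi x))
    - P.eta z * (T x y P.xi + T y P.xi x - P.eta y * T x P.xi P.xi) = 0

/-- The defining condition of the basic class F₁₀. -/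
def ClassF10 (P : PiStruct V) (F : Tri V) : Prop :=
  ∀ x y z : V, F x y z = -(P.eta x) * F P.xi (P.phi y) (P.phi z)

/-- characterisation of the torsion `T¹` in the class F₁₀. -/
theorem classF10_T1_properties
    [FiniteDimensional ℝ V] (n : ℕ) (hn : 1 ≤ n)
    (hdim : Module.finrank ℝ V = 2 * n + 1)
    (P : PiStruct V) (F : Tri V) (hF : IsFund P F)
    (h10 : ClassF10 P F) :
    (∀ x y z : V, T1 P F x y z =
      P.eta x * T1 P F P.xi y z - P.eta y * T1 P F P.xi x z) ∧
    (∀ y z : V, T1 P F P.xi y z = -T1 P F P.xi z y) ∧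
    (∀ y z : V, T1 P F P.xi y z = -T1 P F P.xi (P.phi y) (P.phi z)) := by
  have hetaxi : P.eta P.xi = 1 := P.eta_xi
  -- F ξ ξ w = 0
  have L1 : ∀ w : V, F P.xi P.xi w = 0 := by
    intro w
    have := h10 P.xi P.xi w
    simpa [P.phi_xi, hetaxi] using this
  -- F x w ξ = 0
  have L2 : ∀ x w : V, F x w P.xi = 0 := by
    intro x w
    have := h10 x w P.xi
    simpa [P.phi_xi] using this
  -- F x (φ y) z = -η x * F ξ y (φ z)
  have L3 : ∀ x y z : V, F x (P.phi y) z = -(P.eta x) * F P.xi y (P.phi z) := by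
    intro x y z
    have h := h10 x (P.phi y) z
    rw [P.phi_phi y] at h
    have hexp : F P.xi (y - (⟪y, P.xi⟫ : ℝ) • P.xi) (P.phi z)
        = F P.xi y (P.phi z) - ⟪y, P.xi⟫ * F P.xi P.xi (P.phi z) := by
      simp [map_sub, map_smul, LinearMap.sub_apply, LinearMap.smul_apply, smul_eq_mul]
    rw [hexp, L1] at h
    simpa using h
  -- main reduction
  have T1eq : ∀ x y z : V, T1 P F x y z
      = (1/2) * (P.eta x * F P.xi y (P.phi z) - P.eta y * F P.xi x (P.phi z)) := by
    intro x y z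
    unfold T1
    rw [L3 x y z, L3 y x z, L2, L2, L2, L2]
    ring
  have T1xi : ∀ y z : V, T1 P F P.xi y z = (1/2) * F P.xi y (P.phi z) := by
    intro y z
    rw [T1eq, hetaxi, L1]
    ring
  refine ⟨?_, ?_, ?_⟩
  · intro x y z
    rw [T1eq, T1xi, T1xi]
    ring
  · intro y z
    rw [T1xi, T1xi]
    have hsym := hF.1 P.xi y (P.phi z)
    have h3 := L3 P.xi z y
    rw [hetaxi] at h3
    rw [hsym, h3]
    ring
  · intro y z
    rw [T1xi, T1xi]
    rw [P.phi_phi z]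
    have hexp : F P.xi (P.phi y) (z - (⟪z, P.xi⟫ : ℝ) • P.xi)
        = F P.xi (P.phi y) z - ⟪z, P.xi⟫ * F P.xi (P.phi y) P.xi := by
      simp [map_sub, map_smul, smul_eq_mul]
    rw [hexp, L2]
    have h3 := L3 P.xi y z
    rw [hetaxi] at h3
    rw [h3]
    ring
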